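/- Let Ω ⊆ ℝ² satisfy properties (i) and (*). Then for every boundary point ω = (x,y) ∈ ∂Ω there exists a point (p,q) in the boundary ∂Ω^◇ of the antipolar such that px − qy = 1 (i.e., ω lies on the line L(p,q)). -/

import Mathlib

open scoped Pointwise

/-- The antipolar of a set `Ω ⊆ ℝ²`:
`Ω^◇ = {(p,q) : p·x − q·y ≥ 1 for all (x,y) ∈ Ω}`. -/
def antipolar (Ω : Set (ℝ × ℝ)) : Set (ℝ × ℝ) :=
  {pq | ∀ xy ∈ Ω, 1 ≤ pq.1 * xy.1 - pq.2 * xy.2}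

/-- Property (i): `Ω` is nonempty, convex, closed, does not contain the origin,
and has the ray property `λΩ ⊆ Ω` for every `λ > 1`. -/
def PropI (Ω : Set (ℝ × ℝ)) : Prop :=
  Ω.Nonempty ∧ Convex ℝ Ω ∧ IsClosed Ω ∧ (0 : ℝ × ℝ) ∉ Ω ∧
    ∀ c : ℝ, 1 < c → c • Ω ⊆ Ω

/-- Property (*): no ray from the origin lies on the boundary of `Ω`,
i.e. `λΩ ∩ ∂Ω = ∅` for all `λ > 1`. -/
def PropStar (Ω : Set (ℝ × ℝ)) : Prop :=
  ∀ c : ℝ, 1 < c → (c • Ω) ∩ frontier Ω = ∅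

/-- If `Ω` satisfies (i) and (*), then each boundary point `ω = (x,y) ∈ ∂Ω` lies
on the line `L(p,q) = {p·x − q·y = 1}` for some `(p,q) ∈ ∂Ω^◇`. -/
theorem boundary_point_on_line_of_propStar
    (Ω : Set (ℝ × ℝ)) (hΩ : PropI Ω) (hstar : PropStar Ω) :
    ∀ ω ∈ frontier Ω, ∃ pq ∈ frontier (antipolar Ω),
      pq.1 * ω.1 - pq.2 * ω.2 = 1 := by
  obtain ⟨hne, hconv, hclosed, h0, hray⟩ := hΩ
  intro ω hω
  have hωΩ : ω ∈ Ω := hclosed.closure_eq ▸ hω.1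
  -- dilates of points of Ω are interior points
  have hint : ∀ z ∈ Ω, ∀ c : ℝ, 1 < c → c • z ∈ interior Ω := by
    intro z hz c hc
    have hzm : c • z ∈ c • Ω := Set.smul_mem_smul_set hz
    have hzΩ : c • z ∈ Ω := hray c hc hzm
    have hnf : c • z ∉ frontier Ω := by
      intro hf
      have : ((c • Ω) ∩ frontier Ω).Nonempty := ⟨c • z, hzm, hf⟩
      rw [hstar c hc] at this
      exact Set.not_nonempty_empty this
    rw [hclosed.frontier_eq] at hnf
    by_contra h
    exact hnf ⟨hzΩ, h⟩
  have hy : (2:ℝ) • ω ∈ interior Ω := hint ω hωΩ 2 one_lt_two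
  have hωni : ω ∉ interior Ω := hω.2
  obtain ⟨f, hf⟩ := geometric_hahn_banach_open_point hconv.interior isOpen_interior hωni
  set c := f ω with hc
  have h2c : f ((2:ℝ) • ω) = 2 * c := by rw [map_smul]; simp [hc]
  have hclt : c < 0 := by
    have h2 : f ((2:ℝ) • ω) < c := hf _ hy
    rw [h2c] at h2; linarith
  have hcn : c ≠ 0 := ne_of_lt hclt
  -- f ≤ c on Ω
  have hle : ∀ z ∈ Ω, f z ≤ c := by
    intro z hz
    by_contra h
    push_neg at h
    have key : ∀ t : ℝ, 0 < t → t ≤ 1 → f z + t * (2 * c - f z) < c := by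
      intro t ht ht1
      have hmem : z + t • ((2:ℝ) • ω - z) ∈ interior Ω := by
        refine hconv.add_smul_mem_interior hz ?_ ⟨ht, ht1⟩
        simpa using hy
      have := hf _ hmem
      rw [map_add, map_smul, map_sub, h2c] at this
      simpa [smul_eq_mul] using this
    have hd : (0:ℝ) < f z - 2 * c := by linarith
    set t0 : ℝ := (f z - c) / (2 * (f z - 2 * c)) with ht0
    have ht0pos : 0 < t0 := div_pos (by linarith) (by linarith)
    have ht0le : t0 ≤ 1 := by
      rw [ht0, div_le_one (by linarith)]
      linarith
    have hkey := key t0 ht0pos ht0le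
    have hval : f z + t0 * (2 * c - f z) = (f z + c) / 2 := by
      have h2 : 2 * (f z - 2 * c) ≠ 0 := (by linarith : (0:ℝ) < 2 * (f z - 2 * c)).ne'
      rw [ht0, div_mul_eq_mul_div, add_div' _ _ _ h2, div_eq_div_iff h2 two_ne_zero]; ring
    rw [hval] at hkey
    linarith
  -- coordinates of f
  set a := f (1, 0) with ha
  set b := f (0, 1) with hb
  have hrep : ∀ z : ℝ × ℝ, f z = z.1 * a + z.2 * b := by
    intro z
    have hz : z = z.1 • ((1:ℝ), (0:ℝ)) + z.2 • ((0:ℝ), (1:ℝ)) := by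
      ext <;> simp
    calc f z = f (z.1 • ((1:ℝ), (0:ℝ)) + z.2 • ((0:ℝ), (1:ℝ))) := by rw [← hz]
      _ = z.1 * a + z.2 * b := by
          rw [map_add, map_smul, map_smul]; simp [smul_eq_mul, ha, hb]
  set pq : ℝ × ℝ := (a / c, -(b / c)) with hpq
  have hline : pq.1 * ω.1 - pq.2 * ω.2 = 1 := by
    have h1 : pq.1 * ω.1 - pq.2 * ω.2 = (ω.1 * a + ω.2 * b) / c := by
      rw [hpq]; ring
    rw [h1, ← hrep ω, ← hc, div_self hcn]
  have hmem : pq ∈ antipolar Ω := by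
    intro xy hxy
    have hzle := hle xy hxy
    have h1 : pq.1 * xy.1 - pq.2 * xy.2 = f xy / c := by
      rw [hpq, hrep xy]; ring
    rw [h1, le_div_iff_of_neg hclt]
    linarith
  refine ⟨pq, ?_, hline⟩
  rw [frontier_eq_closure_inter_closure]
  refine ⟨subset_closure hmem, ?_⟩
  have htend : Filter.Tendsto (fun t : ℝ => t • pq) (nhdsWithin 1 (Set.Iio 1))
      (nhds pq) := by
    have hcont : Continuous fun t : ℝ => t • pq := continuous_id.smul continuous_const
    have h := Filter.Tendsto.mono_left (hcont.tendsto 1)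
      (nhdsWithin_le_nhds (s := Set.Iio 1))
    simpa using h
  refine mem_closure_of_tendsto htend ?_
  filter_upwards [self_mem_nhdsWithin] with t ht
  intro hmem'
  have h1 := hmem' ω hωΩ
  simp only [Prod.smul_fst, Prod.smul_snd, smul_eq_mul] at h1
  have h2 : t * pq.1 * ω.1 - t * pq.2 * ω.2 = t := by
    calc t * pq.1 * ω.1 - t * pq.2 * ω.2 = t * (pq.1 * ω.1 - pq.2 * ω.2) := by ring
      _ = t := by rw [hline]; ring
  have ht1 : t < 1 := ht
  rw [h2] at h1
  linarith
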